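/- Let A be a bounded operator on a Hilbert space H and g ∈ ran A. If the Krylov intersection I(A,g) := closure(K(A,g)) ∩ A(K(A,g)^⊥) is trivial (equals {0}) and A is injective, then any solution f to Af = g belongs to the closure of K(A,g). -/

import Mathlib

/-- If `A` is bounded and injective, `g ∈ ran A`, and the Krylov intersection
`I(A,g) = closure(K(A,g)) ∩ A(K(A,g)^⊥)` is trivial, then any solution `f` of
`Af = g` belongs to the closure of `K(A,g)`. -/
theorem stmt5 {H : Type*} [NormedAddCommGroup H] [InnerProductSpace ℂ H] [CompleteSpace H]
    (A : H →L[ℂ] H) (hinj : Function.Injective A)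
    (g f : H) (hf : A f = g)
    (hI : closure ((Submodule.span ℂ (Set.range fun k : ℕ => (A ^ k) g)) : Set H)
        ∩ (A '' ((Submodule.span ℂ (Set.range fun k : ℕ => (A ^ k) g))ᗮ : Set H)) = {0}) :
    f ∈ closure ((Submodule.span ℂ (Set.range fun k : ℕ => (A ^ k) g)) : Set H) := by
  set S : Submodule ℂ H := Submodule.span ℂ (Set.range fun k : ℕ => (A ^ k) g) with hS
  set T : Submodule ℂ H := S.topologicalClosure with hT
  have hTS : (T : Set H) = closure (S : Set H) := rfl
  -- A maps S into S
  have hAS : ∀ x ∈ S, A x ∈ S := by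
    intro x hx
    have : S ≤ Submodule.comap (A : H →ₗ[ℂ] H) S := by
      rw [hS]
      apply Submodule.span_le.2
      rintro _ ⟨k, rfl⟩
      simp only [SetLike.mem_coe, Submodule.mem_comap, ContinuousLinearMap.coe_coe]
      have h : A ((A ^ k) g) = (A ^ (k + 1)) g := by
        rw [pow_succ']; rfl
      rw [h]
      exact Submodule.subset_span ⟨k + 1, rfl⟩
    exact this hx
  -- A maps T into T
  have hAT : ∀ x ∈ T, A x ∈ T := by
    intro x hx
    have h1 : A '' closure (S : Set H) ⊆ closure (A '' (S : Set H)) :=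
      image_closure_subset_closure_image A.continuous
    have h2 : A '' (S : Set H) ⊆ (S : Set H) := by
      rintro _ ⟨y, hy, rfl⟩; exact hAS y hy
    have := h1 ⟨x, hx, rfl⟩
    exact closure_mono h2 this
  set p : H := (T.orthogonalProjectionOnto f : H) with hp
  have hpT : p ∈ T := (T.orthogonalProjectionOnto f).2
  have hperp : f - p ∈ Sᗮ :=
    Submodule.orthogonal_le S.le_topologicalClosure
      (Submodule.sub_starProjection_mem_orthogonal (K := T) f)
  have hgS : g ∈ S := by
    refine Submodule.subset_span ⟨0, ?_⟩
    simp
  have hkey : A (f - p) ∈ closure ((S : Set H)) ∩ (A '' (Sᗮ : Set H)) := by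
    constructor
    · rw [← hTS]
      have : A (f - p) = g - A p := by rw [map_sub, hf]
      rw [this]
      exact T.sub_mem (S.le_topologicalClosure hgS) (hAT p hpT)
    · exact ⟨f - p, hperp, rfl⟩
  rw [hI] at hkey
  have : A (f - p) = A 0 := by simpa using hkey
  have hfp : f - p = 0 := hinj this
  have : f = p := by rwa [sub_eq_zero] at hfp
  rw [this, ← hTS]
  exact hpT
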